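/- After an incremental update on the set E_i(v) of edges incoming to v, for every source s ∈ V the following hold: (i) if d'(s,v) = d(s,v), then the number σ̂'_{sv} of shortest paths from s to v in G' that use an edge of E_i(v) equals Σ_{j : d(s,u_j) + w'(u_j,v) = d(s,v)} σ_{su_j}, and σ'_{sv} = σ_{sv} + σ̂'_{sv}; (ii) if d'(s,v) < d(s,v), then σ'_{sv} = Σ_{j : d(s,u_j) + w'(u_j,v) = d'(s,v)} σ_{su_j}. -/

import Mathlib

open scoped ENNReal

namespace BC

variable {V : Type*}

/-- `p` is a path from `s` to `t` in the weighted digraph with weight function `w`;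
an edge is present iff its weight is not `⊤`. -/
def IsPath (w : V → V → ℝ≥0∞) (s t : V) (p : List V) : Prop :=
  p ≠ [] ∧ p.head? = some s ∧ p.getLast? = some t ∧ p.Chain' (fun a b => w a b ≠ ⊤)

/-- The weight of a path: the sum of the weights of its consecutive edges. -/
noncomputable def pWeight (w : V → V → ℝ≥0∞) (p : List V) : ℝ≥0∞ :=
  ((p.zip p.tail).map fun e => w e.1 e.2).sum

/-- The shortest-path distance `d(s,t)` (equal to `⊤` if no path exists). -/
noncomputable def dist (w : V → V → ℝ≥0∞) (s t : V) : ℝ≥0∞ :=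
  ⨅ p ∈ {p | IsPath w s t p}, pWeight w p

/-- `p` is a shortest path from `s` to `t`. -/
def IsShortest (w : V → V → ℝ≥0∞) (s t : V) (p : List V) : Prop :=
  IsPath w s t p ∧ pWeight w p = dist w s t

/-- `σ_{st}`: the number of shortest paths from `s` to `t`. -/
noncomputable def nsp (w : V → V → ℝ≥0∞) (s t : V) : ℕ :=
  Set.ncard {p | IsShortest w s t p}

/-- `σ_{st}(x)`: the number of shortest paths from `s` to `t` passing through `x`. -/
noncomputable def nspVia (w : V → V → ℝ≥0∞) (s t x : V) : ℕ :=
  Set.ncard {p | IsShortest w s t p ∧ x ∈ p}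

/-- The directed edge `(a,b)` lies on the path `p`. -/
def edgeOn (p : List V) (a b : V) : Prop := (a, b) ∈ p.zip p.tail

/-- The shortest-path DAG rooted at `s`: the edges lying on shortest paths from `s`. -/
def dagSet (w : V → V → ℝ≥0∞) (s : V) : Set (V × V) :=
  {e | w e.1 e.2 ≠ ⊤ ∧ dist w s e.1 ≠ ⊤ ∧ dist w s e.1 + w e.1 e.2 = dist w s e.2}

/-! ### list helpers -/

lemma exists_dup_decomp {α : Type*} : ∀ {l : List α}, ¬ l.Nodup →
    ∃ (a : α) (l1 l2 l3 : List α), l = l1 ++ a :: (l2 ++ a :: l3) := by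
  intro l
  induction l with
  | nil => simp
  | cons x xs ih =>
    intro h
    rw [List.nodup_cons] at h
    by_cases hx : x ∈ xs
    · obtain ⟨l2, l3, rfl⟩ := List.append_of_mem hx
      exact ⟨x, [], l2, l3, by simp⟩
    · obtain ⟨a, l1, l2, l3, rfl⟩ := ih (by tauto)
      exact ⟨a, x :: l1, l2, l3, by simp⟩

lemma zip_tail_append (a b : V) : ∀ (l1 l2 : List V),
    ((l1 ++ [a]) ++ b :: l2).zip (((l1 ++ [a]) ++ b :: l2).tail)
      = (l1 ++ [a]).zip (l1 ++ [a]).tail ++ (a, b) :: ((b :: l2).zip l2) := by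
  intro l1 l2
  induction l1 with
  | nil => simp
  | cons x xs ih =>
    cases xs with
    | nil => simp
    | cons y ys =>
      simp only [List.cons_append, List.tail_cons, List.zip_cons_cons] at ih ⊢
      rw [ih]

lemma mem_right_of_mem_zip_tail {p : List V} {a b : V} (h : (a, b) ∈ p.zip p.tail) : b ∈ p :=
  List.mem_of_mem_tail (List.of_mem_zip h).2

lemma chain'_iff_edges (R : V → V → Prop) : ∀ p : List V,
    p.Chain' R ↔ ∀ e ∈ p.zip p.tail, R e.1 e.2 := by
  intro p
  induction p with
  | nil => simp [List.Chain', List.isChain_nil]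
  | cons x xs ih =>
    cases xs with
    | nil => simp [List.Chain', List.isChain_singleton]
    | cons y ys =>
      simp only [List.Chain', List.tail_cons, List.zip_cons_cons, List.isChain_cons_cons, List.mem_cons] at *
      constructor
      · rintro ⟨h1, h2⟩ e (rfl | he)
        · exact h1
        · exact (ih.1 h2) e he
      · intro h
        exact ⟨h _ (Or.inl rfl), ih.2 fun e he => h e (Or.inr he)⟩

/-! ### pWeight lemmas -/

variable {w w' : V → V → ℝ≥0∞}

@[simp] lemma pWeight_nil : pWeight w [] = 0 := by simp [pWeight]

@[simp] lemma pWeight_single (a : V) : pWeight w [a] = 0 := by simp [pWeight]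

lemma pWeight_cons_cons (a b : V) (l : List V) :
    pWeight w (a :: b :: l) = w a b + pWeight w (b :: l) := by
  simp [pWeight]

lemma pWeight_concat_append (l1 : List V) (a b : V) (l2 : List V) :
    pWeight w ((l1 ++ [a]) ++ b :: l2)
      = pWeight w (l1 ++ [a]) + (w a b + pWeight w (b :: l2)) := by
  unfold pWeight
  rw [zip_tail_append]
  simp

lemma pWeight_append_cons (l1 : List V) (x : V) (l2 : List V) :
    pWeight w (l1 ++ x :: l2) = pWeight w (l1 ++ [x]) + pWeight w (x :: l2) := by
  rcases l1.eq_nil_or_concat with rfl | ⟨l1', a, rfl⟩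
  · simp
  · simp only [List.concat_eq_append]
    rw [pWeight_concat_append]
    have h2 : pWeight w ((l1' ++ [a]) ++ [x]) = pWeight w (l1' ++ [a]) + w a x := by
      have := pWeight_concat_append (w := w) l1' a x []
      simpa using this
    rw [h2, add_assoc]

lemma pWeight_concat {q : List V} {u : V} (h : q.getLast? = some u) (v : V) :
    pWeight w (q ++ [v]) = pWeight w q + w u v := by
  rcases q.eq_nil_or_concat with rfl | ⟨l1', a, rfl⟩
  · simp at h
  · simp only [List.concat_eq_append] at h ⊢
    rw [List.getLast?_concat] at h
    obtain rfl : u = a := by simpa using h.symm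
    have := pWeight_concat_append (w := w) l1' u v []
    simpa using this

lemma pWeight_congr {p : List V} (h : ∀ e ∈ p.zip p.tail, w e.1 e.2 = w' e.1 e.2) :
    pWeight w p = pWeight w' p := by
  unfold pWeight
  rw [List.map_congr_left fun e he => h e he]

lemma pWeight_mono (h : ∀ a b, w' a b ≤ w a b) (p : List V) :
    pWeight w' p ≤ pWeight w p :=
  List.sum_le_sum fun e _ => h e.1 e.2

lemma pWeight_ne_top {p : List V} (h : p.Chain' (fun a b => w a b ≠ ⊤)) :
    pWeight w p ≠ ⊤ := by
  rw [chain'_iff_edges] at h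
  unfold pWeight
  generalize p.zip p.tail = L at h ⊢
  induction L with
  | nil => simp
  | cons e es ih =>
    simp only [List.map_cons, List.sum_cons]
    exact ENNReal.add_ne_top.2 ⟨h e (by simp), ih fun e' he' => h e' (by simp [he'])⟩

lemma pWeight_pos (hpos : ∀ a b, 0 < w a b) (x y : V) (l : List V) :
    0 < pWeight w (x :: y :: l) := by
  rw [pWeight_cons_cons]
  exact lt_of_lt_of_le (hpos x y) le_self_add

/-! ### path and dist lemmas -/

lemma isPath_mono (hle : ∀ a b, w' a b ≤ w a b) {s t : V} {p : List V}
    (h : IsPath w s t p) : IsPath w' s t p :=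
  by
  obtain ⟨h0, hh, hl, hc⟩ := h
  refine ⟨h0, hh, hl, hc.imp ?_⟩
  intro a b hab htop
  exact hab (top_le_iff.1 (htop ▸ hle a b))

lemma dist_le {s t : V} {p : List V} (h : IsPath w s t p) : dist w s t ≤ pWeight w p :=
  iInf₂_le p h

lemma dist_mono (hle : ∀ a b, w' a b ≤ w a b) (s t : V) : dist w' s t ≤ dist w s t :=
  le_iInf₂ fun p hp => (dist_le (isPath_mono hle hp)).trans (pWeight_mono hle p)

lemma head?_append_cons (l1 : List V) (x : V) (l2 : List V) :
    (l1 ++ x :: l2).head? = (l1 ++ [x]).head? := by cases l1 <;> simp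

lemma getLast?_append_cons (l1 : List V) (x : V) (l2 : List V) :
    (l1 ++ x :: l2).getLast? = (x :: l2).getLast? := by
  rw [List.getLast?_append]
  cases h : (x :: l2).getLast? with
  | none => simp at h
  | some z => rfl

lemma isPath_prefix {s t : V} {l1 : List V} {x : V} {l2 : List V}
    (h : IsPath w s t (l1 ++ x :: l2)) : IsPath w s x (l1 ++ [x]) := by
  obtain ⟨-, hh, -, hc⟩ := h
  refine ⟨by simp, ?_, List.getLast?_concat, ?_⟩
  · rw [head?_append_cons] at hh; exact hh
  · have heq : l1 ++ x :: l2 = (l1 ++ [x]) ++ l2 := by simp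
    simp only [List.Chain'] at hc
    rw [heq, List.isChain_append] at hc
    exact hc.1

lemma le_dist_add {s u : V} {X c : ℝ≥0∞} (h : ∀ p, IsPath w s u p → X ≤ pWeight w p + c) :
    X ≤ dist w s u + c := by
  rw [dist, ← iInf_subtype'' {p | IsPath w s u p} (pWeight w), ENNReal.iInf_add]
  exact le_iInf fun q => h q.1 q.2

lemma dist_le_of_mem {s t x : V} {p : List V} (h : IsPath w s t p) (hx : x ∈ p) :
    dist w s x ≤ pWeight w p := by
  obtain ⟨l1, l2, rfl⟩ := List.append_of_mem hx
  refine (dist_le (isPath_prefix h)).trans ?_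
  rw [pWeight_append_cons l1 x l2]
  exact le_self_add

lemma isPath_concat {s u : V} {q : List V} (h : IsPath w s u q) (v : V) (hne : w u v ≠ ⊤) :
    IsPath w s v (q ++ [v]) := by
  obtain ⟨h0, hh, hl, hc⟩ := h
  refine ⟨by simp, ?_, List.getLast?_concat, ?_⟩
  · rw [List.head?_append, hh]; rfl
  · simp only [List.Chain'] at hc ⊢
    rw [List.isChain_append]
    refine ⟨hc, List.isChain_singleton _, ?_⟩
    intro x hx y hy
    rw [hl] at hx
    simp only [Option.mem_def, Option.some.injEq, List.head?_cons] at hx hy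
    subst hx; subst hy
    exact hne

lemma IsShortest.nodup {s t : V} {p : List V} (hpos : ∀ a b, 0 < w a b)
    (h : IsShortest w s t p) : p.Nodup := by
  by_contra hnd
  obtain ⟨a, l1, l2, l3, hp⟩ := exists_dup_decomp hnd
  obtain ⟨hne, hh, hl, hc⟩ := h.1
  have hwne : pWeight w p ≠ ⊤ := pWeight_ne_top hc
  subst hp
  have hassoc : l1 ++ a :: (l2 ++ a :: l3) = (l1 ++ [a]) ++ (l2 ++ a :: l3) := by simp
  have hassoc2 : l2 ++ a :: l3 = (l2 ++ [a]) ++ l3 := by simp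
  simp only [List.Chain'] at hc
  rw [hassoc, List.isChain_append] at hc
  obtain ⟨hc1, hc2', hc5⟩ := hc
  rw [hassoc2, List.isChain_append] at hc2'
  obtain ⟨-, hc4, hc6⟩ := hc2'
  have hl3 : (a :: l3).getLast? = some t := by
    rw [show l1 ++ a :: (l2 ++ a :: l3) = (l1 ++ a :: l2) ++ (a :: l3) by simp,
      getLast?_append_cons] at hl
    exact hl
  have hpath' : IsPath w s t (l1 ++ a :: l3) := by
    refine ⟨by simp, ?_, ?_, ?_⟩
    · rw [head?_append_cons] at hh ⊢
      rw [head?_append_cons] at hh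
      exact hh
    · rw [getLast?_append_cons]; exact hl3
    · simp only [List.Chain']
      rw [show l1 ++ a :: l3 = (l1 ++ [a]) ++ l3 by simp, List.isChain_append]
      refine ⟨hc1, hc4, ?_⟩
      intro x hx y hy
      rw [List.getLast?_concat] at hx
      simp only [Option.mem_def, Option.some.injEq] at hx
      subst hx
      exact hc6 a (by rw [List.getLast?_concat]; rfl) y hy
  have e1 : pWeight w (l1 ++ a :: (l2 ++ a :: l3))
      = pWeight w (l1 ++ [a]) + pWeight w (a :: (l2 ++ a :: l3)) :=
    pWeight_append_cons l1 a (l2 ++ a :: l3)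
  have e2 : pWeight w (a :: (l2 ++ a :: l3))
      = pWeight w ((a :: l2) ++ [a]) + pWeight w (a :: l3) := by
    have h' := pWeight_append_cons (w := w) (a :: l2) a l3
    simpa using h'
  have e3 : pWeight w (l1 ++ a :: l3) = pWeight w (l1 ++ [a]) + pWeight w (a :: l3) :=
    pWeight_append_cons l1 a l3
  rw [e1, e2] at hwne
  have hA : pWeight w (l1 ++ [a]) ≠ ⊤ := fun h' => hwne (by rw [h']; simp)
  have hC : pWeight w (a :: l3) ≠ ⊤ := fun h' => hwne (by rw [h']; simp)
  have hBpos : 0 < pWeight w ((a :: l2) ++ [a]) := by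
    rcases l2 with _ | ⟨b, bs⟩
    · simpa using pWeight_pos hpos a a []
    · simpa using pWeight_pos hpos a b (bs ++ [a])
  have hlt : pWeight w (l1 ++ a :: l3) < pWeight w (l1 ++ a :: (l2 ++ a :: l3)) := by
    rw [e1, e2, e3]
    refine ENNReal.add_lt_add_left hA ?_
    rw [add_comm]
    exact ENNReal.lt_add_right hC hBpos.ne'
  have hd := dist_le hpath'
  rw [h.2] at hlt
  exact absurd (hd.trans_lt hlt) (lt_irrefl _)

lemma shortest_finite [Fintype V] (hpos : ∀ a b, 0 < w a b) (s t : V) :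
    {p | IsShortest w s t p}.Finite :=
  (List.finite_length_le V (Fintype.card V)).subset fun _ hp =>
    (IsShortest.nodup hpos hp).length_le_card

lemma ncard_biUnion {ι α : Type*} {t : Finset ι} {f : ι → Set α}
    (hf : ∀ i ∈ t, (f i).Finite)
    (hd : ∀ i ∈ t, ∀ j ∈ t, i ≠ j → Disjoint (f i) (f j)) :
    (⋃ i ∈ t, f i).ncard = ∑ i ∈ t, (f i).ncard := by
  classical
  induction t using Finset.induction_on with
  | empty => simp
  | @insert a t ha ih =>
    rw [Finset.set_biUnion_insert, Finset.sum_insert ha,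
      Set.ncard_union_eq ?_ (hf a (by simp)) ?_,
      ih (fun i hi => hf i (by simp [hi]))
        (fun i hi j hj hij => hd i (by simp [hi]) j (by simp [hj]) hij)]
    · simp only [Set.disjoint_iUnion_right]
      intro i hi
      exact hd a (by simp) i (by simp [hi]) (fun h => ha (h ▸ hi))
    · exact Set.Finite.biUnion t.finite_toSet fun i hi =>
        hf i (Finset.mem_insert_of_mem (by simpa using hi))

lemma decompose_shortest {s v u : V} {p : List V} (hpos : ∀ a b, 0 < w a b)
    (hp : IsShortest w s v p) (he : edgeOn p u v) :
    ∃ q, p = q ++ [v] ∧ v ∉ q ∧ q.getLast? = some u ∧ IsPath w s u q ∧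
      pWeight w p = pWeight w q + w u v := by
  have hnd := IsShortest.nodup hpos hp
  obtain (rfl | ⟨q, z, rfl⟩) := p.eq_nil_or_concat
  · exact absurd rfl hp.1.1
  simp only [List.concat_eq_append] at *
  have hzv : v = z := by
    have hl := hp.1.2.2.1
    rw [List.getLast?_concat] at hl
    simpa using hl.symm
  subst hzv
  have hvq : v ∉ q := by
    rw [List.nodup_append] at hnd
    intro hv
    exact hnd.2.2 v hv v (by simp) rfl
  rcases q.eq_nil_or_concat with rfl | ⟨q', a, rfl⟩
  · simp [edgeOn] at he
  simp only [List.concat_eq_append] at *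
  rw [edgeOn, zip_tail_append a v q' []] at he
  have hua : u = a := by
    rcases List.mem_append.1 he with h1 | h2
    · exact absurd (mem_right_of_mem_zip_tail h1) hvq
    · have h2' : (u, v) = (a, v) := by simpa using h2
      exact congrArg Prod.fst h2'
  subst hua

  refine ⟨q' ++ [u], rfl, hvq, List.getLast?_concat, ?_,
    pWeight_concat (List.getLast?_concat) v⟩
  have hp1 : IsPath w s v (q' ++ u :: [v]) := by
    have := hp.1
    simpa using this
  exact isPath_prefix hp1

/- STATEMENT 10: after an incremental update on the set `E_i(v) = {(u,v) : u ∈ U}` of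
edges incoming to `v`:
(i) if `d'(s,v) = d(s,v)`, then the number `σ̂'_{sv}` of shortest paths from `s` to `v`
in `G'` using an edge of `E_i(v)` equals `Σ_{u ∈ U, d(s,u) + w'(u,v) = d(s,v)} σ_{su}`,
and `σ'_{sv} = σ_{sv} + σ̂'_{sv}`;
(ii) if `d'(s,v) < d(s,v)`, then `σ'_{sv} = Σ_{u ∈ U, d(s,u) + w'(u,v) = d'(s,v)} σ_{su}`. -/
open Classical in
theorem vertex_update_sigma_to_v [Fintype V]
(w w' : V → V → ℝ≥0∞) (v : V) (U : Finset V)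
    (hpos : ∀ a b, 0 < w a b) (hpos' : ∀ a b, 0 < w' a b)
    (hdec : ∀ u ∈ U, w' u v < w u v)
    (hsame : ∀ a b : V, ¬(b = v ∧ a ∈ U) → w' a b = w a b)
    (s : V) :
    (dist w' s v = dist w s v →
      (Set.ncard {p | IsShortest w' s v p ∧ ∃ u ∈ U, edgeOn p u v} =
        ∑ u ∈ U, if dist w s u + w' u v = dist w s v then nsp w s u else 0) ∧
      nsp w' s v = nsp w s v +
        Set.ncard {p | IsShortest w' s v p ∧ ∃ u ∈ U, edgeOn p u v}) ∧
    (dist w' s v < dist w s v →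
      nsp w' s v =
        ∑ u ∈ U, if dist w s u + w' u v = dist w' s v then nsp w s u else 0) := by
  classical
  have hle : ∀ a b, w' a b ≤ w a b := by
    intro a b
    by_cases h : b = v ∧ a ∈ U
    · obtain ⟨rfl, ha⟩ := h
      exact (hdec a ha).le
    · exact (hsame a b h).le
  have hsame2 : ∀ a b : V, b ≠ v → w' a b = w a b := fun a b hb => hsame a b fun hc => hb hc.1
  have hdmono : dist w' s v ≤ dist w s v := dist_mono hle s v
  have hub : ∀ u ∈ U, dist w' s v ≤ dist w s u + w' u v := by
    intro u hu
    refine le_dist_add ?_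
    intro p hp
    have hp' : IsPath w' s u p := isPath_mono hle hp
    have hcat : IsPath w' s v (p ++ [v]) := isPath_concat hp' v (hdec u hu).ne_top
    calc dist w' s v ≤ pWeight w' (p ++ [v]) := dist_le hcat
      _ = pWeight w' p + w' u v := pWeight_concat hp.2.2.1 v
      _ ≤ pWeight w p + w' u v := add_le_add_left (pWeight_mono hle p) _
  have htransE : ∀ (q : List V), (∀ e ∈ q.zip q.tail, w' e.1 e.2 = w e.1 e.2) →
      pWeight w' q = pWeight w q ∧
        (q.Chain' (fun a b => w a b ≠ ⊤) ↔ q.Chain' (fun a b => w' a b ≠ ⊤)) := by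
    intro q hE
    refine ⟨pWeight_congr hE, ?_⟩
    rw [chain'_iff_edges, chain'_iff_edges]
    constructor
    · intro h e he; rw [hE e he]; exact h e he
    · intro h e he; rw [← hE e he]; exact h e he
  have hqtrans : ∀ (q : List V), v ∉ q →
      pWeight w' q = pWeight w q ∧
        (q.Chain' (fun a b => w a b ≠ ⊤) ↔ q.Chain' (fun a b => w' a b ≠ ⊤)) :=
    fun q hvq => htransE q fun e he =>
      hsame2 e.1 e.2 fun h => hvq (h ▸ mem_right_of_mem_zip_tail he)
  have hnoE_transfer : ∀ (p : List V), ¬(∃ u ∈ U, edgeOn p u v) →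
      ∀ e ∈ p.zip p.tail, w' e.1 e.2 = w e.1 e.2 := by
    intro p hno e he
    refine hsame e.1 e.2 ?_
    rintro ⟨hbv, haU⟩
    refine hno ⟨e.1, haU, ?_⟩
    rw [edgeOn, show (e.1, v) = e by rw [← hbv]]
    exact he
  -- the master identity for the set A of shortest w'-paths through an updated edge
  have hA : {p | IsShortest w' s v p ∧ ∃ u ∈ U, edgeOn p u v}
      = ⋃ u ∈ U.filter (fun u => dist w s u + w' u v = dist w' s v),
          (fun q => q ++ [v]) '' {q | IsShortest w s u q} := by
    ext p
    simp only [Set.mem_setOf_eq, Set.mem_iUnion, Finset.mem_filter, Set.mem_image, exists_prop]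
    constructor
    · rintro ⟨hp, u, hu, he⟩
      obtain ⟨q, rfl, hvq, hql, hqpath, hwt⟩ := decompose_shortest hpos' hp he
      have htr := hqtrans q hvq
      have hqpathw : IsPath w s u q :=
        ⟨hqpath.1, hqpath.2.1, hqpath.2.2.1, htr.2.2 hqpath.2.2.2⟩
      have hdq : dist w s u ≤ pWeight w q := dist_le hqpathw
      have hcvne : w' u v ≠ ⊤ := (hdec u hu).ne_top
      have h1 : pWeight w q + w' u v = dist w' s v := by
        rw [← htr.1, ← hwt]; exact hp.2
      have h3 : pWeight w q ≤ dist w s u := by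
        have h4 : pWeight w q + w' u v ≤ dist w s u + w' u v := by
          rw [h1]; exact hub u hu
        exact (ENNReal.add_le_add_iff_right hcvne).1 h4
      have hqs : pWeight w q = dist w s u := le_antisymm h3 hdq
      refine ⟨u, ⟨hu, ?_⟩, q, ⟨hqpathw, hqs⟩, rfl⟩
      rw [← hqs]; exact h1
    · rintro ⟨u, ⟨hu, hcond⟩, q, hq, rfl⟩
      have hql : q.getLast? = some u := hq.1.2.2.1
      have hqne : pWeight w q ≠ ⊤ := pWeight_ne_top hq.1.2.2.2
      have hdune : dist w s u ≠ ⊤ := hq.2 ▸ hqne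
      have hvq : v ∉ q := by
        intro hv
        have h1 : dist w s v ≤ pWeight w q := dist_le_of_mem hq.1 hv
        have h2 : dist w s u < dist w' s v := by
          rw [← hcond]
          exact ENNReal.lt_add_right hdune (hpos' u v).ne'
        have h3 : dist w' s v ≤ dist w s u :=
          hdmono.trans (h1.trans_eq hq.2.symm.symm) |>.trans le_rfl
        exact absurd (h2.trans_le h3) (lt_irrefl _)
      have htr := hqtrans q hvq
      have hqpath' : IsPath w' s u q := ⟨hq.1.1, hq.1.2.1, hql, htr.2.1 hq.1.2.2.2⟩
      have hp' : IsPath w' s v (q ++ [v]) := isPath_concat hqpath' v (hdec u hu).ne_top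
      have hwt : pWeight w' (q ++ [v]) = pWeight w q + w' u v := by
        rw [pWeight_concat hql v, htr.1]
      refine ⟨⟨hp', ?_⟩, u, hu, ?_⟩
      · rw [hwt, hq.2, hcond]
      · rcases q.eq_nil_or_concat with rfl | ⟨q', a, rfl⟩
        · exact absurd rfl hq.1.1
        simp only [List.concat_eq_append] at *
        have : a = u := by rw [List.getLast?_concat] at hql; simpa using hql
        subst this
        rw [edgeOn, zip_tail_append a v q' []]
        simp
  have hfinS : ∀ t : V, {q | IsShortest w s t q}.Finite := shortest_finite hpos s
  have hfinS' : {p | IsShortest w' s v p}.Finite := shortest_finite hpos' s v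
  have hAfin : {p | IsShortest w' s v p ∧ ∃ u ∈ U, edgeOn p u v}.Finite :=
    hfinS'.subset fun p hp => hp.1
  have hAcard : Set.ncard {p | IsShortest w' s v p ∧ ∃ u ∈ U, edgeOn p u v}
      = ∑ u ∈ U, if dist w s u + w' u v = dist w' s v then nsp w s u else 0 := by
    rw [hA, ncard_biUnion]
    · rw [← Finset.sum_filter]
      refine Finset.sum_congr rfl ?_
      intro u _
      rw [Set.ncard_image_of_injective _ (List.append_left_injective [v])]
      rfl
    · intro u _
      exact (hfinS u).image _
    · intro u1 _ u2 _ hne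
      rw [Set.disjoint_left]
      rintro p ⟨q1, hq1, rfl⟩ ⟨q2, hq2, heq2⟩
      obtain rfl : q2 = q1 := List.append_left_injective [v] heq2
      exact hne (by
        have h1 := hq1.1.2.2.1
        have h2 := hq2.1.2.2.1
        rw [h1] at h2
        simpa using h2)
  constructor
  · -- case (i)
    intro heq
    have hB : {p | IsShortest w' s v p ∧ ¬ ∃ u ∈ U, edgeOn p u v}
        = {p | IsShortest w s v p} := by
      ext p
      simp only [Set.mem_setOf_eq]
      constructor
      · rintro ⟨hp, hno⟩
        have htr := htransE p (hnoE_transfer p hno)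
        have hpw : IsPath w s v p := ⟨hp.1.1, hp.1.2.1, hp.1.2.2.1, htr.2.2 hp.1.2.2.2⟩
        exact ⟨hpw, by rw [← htr.1, hp.2, heq]⟩
      · intro hp
        have hnoE : ¬ ∃ u ∈ U, edgeOn p u v := by
          rintro ⟨u, hu, he⟩
          obtain ⟨q, rfl, hvq, hql, hqpath, hwt⟩ := decompose_shortest hpos hp he
          have htr := hqtrans q hvq
          have hqpath' : IsPath w' s u q :=
            ⟨hqpath.1, hqpath.2.1, hql, htr.2.1 hqpath.2.2.2⟩
          have hp' : IsPath w' s v (q ++ [v]) := isPath_concat hqpath' v (hdec u hu).ne_top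
          have hq_ne : pWeight w q ≠ ⊤ := pWeight_ne_top hqpath.2.2.2
          have hlt2 : pWeight w' (q ++ [v]) < pWeight w (q ++ [v]) := by
            rw [pWeight_concat hql v, pWeight_concat hql v, htr.1]
            exact ENNReal.add_lt_add_left hq_ne (hdec u hu)
          have hcontr : dist w' s v < dist w' s v :=
            lt_of_le_of_lt (dist_le hp') (by rw [heq, ← hp.2]; exact hlt2)
          exact absurd hcontr (lt_irrefl _)
        have htr := htransE p (hnoE_transfer p hnoE)
        have hpw' : IsPath w' s v p := ⟨hp.1.1, hp.1.2.1, hp.1.2.2.1, htr.2.1 hp.1.2.2.2⟩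
        exact ⟨⟨hpw', by rw [htr.1, hp.2, heq]⟩, hnoE⟩
    have hsplit : {p | IsShortest w' s v p}
        = {p | IsShortest w' s v p ∧ ¬ ∃ u ∈ U, edgeOn p u v}
          ∪ {p | IsShortest w' s v p ∧ ∃ u ∈ U, edgeOn p u v} := by
      ext p
      simp only [Set.mem_setOf_eq, Set.mem_union]
      tauto
    have hcount : nsp w' s v = nsp w s v
        + Set.ncard {p | IsShortest w' s v p ∧ ∃ u ∈ U, edgeOn p u v} := by
      rw [nsp, hsplit, Set.ncard_union_eq ?_ ?_ hAfin]
      · rw [hB]; rfl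
      · rw [Set.disjoint_left]
        rintro p ⟨-, hno⟩ ⟨-, hE⟩
        exact hno hE
      · exact hfinS'.subset fun p hp => hp.1
    refine ⟨?_, hcount⟩
    rw [hAcard, heq]
  · -- case (ii)
    intro hlt
    have hall : ∀ p, IsShortest w' s v p → ∃ u ∈ U, edgeOn p u v := by
      intro p hp
      by_contra hno
      have htr := htransE p (hnoE_transfer p hno)
      have hpw : IsPath w s v p := ⟨hp.1.1, hp.1.2.1, hp.1.2.2.1, htr.2.2 hp.1.2.2.2⟩
      have h1 : dist w s v ≤ pWeight w p := dist_le hpw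
      rw [← htr.1, hp.2] at h1
      exact absurd (hlt.trans_le h1) (lt_irrefl _)
    have hset : {p | IsShortest w' s v p}
        = {p | IsShortest w' s v p ∧ ∃ u ∈ U, edgeOn p u v} := by
      ext p
      simp only [Set.mem_setOf_eq]
      exact ⟨fun hp => ⟨hp, hall p hp⟩, fun hp => hp.1⟩
    rw [nsp, hset, hAcard]

end BC
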